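/- In the piecewise affine system ẋ = h_s(r) − εd, ḋ = max(x,0) − βd, ṙ = γd − δr, any two trajectories whose x-components agree wherever x ≥ 0 but differ only while x < 0 have identical d and r components for all time; consequently, an instantaneous perturbation applied to x at a time when x < 0 and which keeps x < 0 until the next upward crossing of x through 0 does not change the subsequent times at which d and r cross their thresholds, i.e., produces zero asymptotic phase shift. -/

import Mathlib

lemma linode_zero (c : ℝ) (f : ℝ → ℝ) (hf : ∀ t, HasDerivAt f (-c * f t) t)
    (h0 : f 0 = 0) : ∀ t, f t = 0 := by
  have hg : ∀ t, HasDerivAt (fun t => f t * Real.exp (c * t)) 0 t := by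
    intro t
    have he : HasDerivAt (fun t => Real.exp (c * t)) (c * Real.exp (c * t)) t := by
      have := (Real.hasDerivAt_exp (c * t)).comp t ((hasDerivAt_id t).const_mul c)
      exact this.congr_deriv (by ring)
    have := (hf t).mul he
    exact this.congr_deriv (by ring)
  have hconst : ∀ t, f t * Real.exp (c * t) = f 0 * Real.exp (c * 0) := by
    intro t
    exact is_const_of_deriv_eq_zero (fun t => (hg t).differentiableAt)
      (fun t => (hg t).deriv) t 0
  intro t
  have := hconst t
  rw [h0, zero_mul] at this
  have hexp := Real.exp_pos (c * t)
  exact (mul_eq_zero.mp this).resolve_right (ne_of_gt hexp)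

/-- Dead-zone property: two trajectories of the PWA system whose `x`-components agree
wherever `x ≥ 0` (i.e. `max x 0` agrees) and share initial `d`, `r` have identical
`d` and `r` components for all time — perturbations of `x` while `x < 0` do not
propagate, producing zero phase shift. -/
theorem stmt19 (β γ δ ε : ℝ) (x₁ d₁ r₁ x₂ d₂ r₂ : ℝ → ℝ)
    (hx₁ : ∀ t, HasDerivAt x₁ ((if r₁ t < 1 then (1:ℝ) else 0) - ε * d₁ t) t)
    (hd₁ : ∀ t, HasDerivAt d₁ (max (x₁ t) 0 - β * d₁ t) t)
    (hr₁ : ∀ t, HasDerivAt r₁ (γ * d₁ t - δ * r₁ t) t)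
    (hx₂ : ∀ t, HasDerivAt x₂ ((if r₂ t < 1 then (1:ℝ) else 0) - ε * d₂ t) t)
    (hd₂ : ∀ t, HasDerivAt d₂ (max (x₂ t) 0 - β * d₂ t) t)
    (hr₂ : ∀ t, HasDerivAt r₂ (γ * d₂ t - δ * r₂ t) t)
    (h0d : d₁ 0 = d₂ 0) (h0r : r₁ 0 = r₂ 0)
    (hagree : ∀ t, max (x₁ t) 0 = max (x₂ t) 0) :
    ∀ t : ℝ, 0 ≤ t → d₁ t = d₂ t ∧ r₁ t = r₂ t := by
  have hD : ∀ t, d₁ t = d₂ t := by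
    have := linode_zero β (fun t => d₁ t - d₂ t)
      (fun t => by
        have := (hd₁ t).sub (hd₂ t)
        exact this.congr_deriv (by rw [hagree t]; ring))
      (by simp [h0d])
    intro t; have := this t; linarith
  have hR : ∀ t, r₁ t = r₂ t := by
    have := linode_zero δ (fun t => r₁ t - r₂ t)
      (fun t => by
        have := (hr₁ t).sub (hr₂ t)
        exact this.congr_deriv (by rw [hD t]; ring))
      (by simp [h0r])
    intro t; have := this t; linarith
  exact fun t _ => ⟨hD t, hR t⟩
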